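/- If a set of unitaries {U₀,…,U_{t−1}} on A ⊗ B satisfies an ε-metric uncertainty relation on A (with ε < 1/(2e)), then it satisfies an entropic uncertainty relation: for every unit vector |ψ⟩ ∈ A ⊗ B, the average Shannon entropy (1/t)Σ_k H(p_{U_k|ψ⟩}) is at least (1 − 2ε)log d_A − η(ε), where η(ε) = −2ε ln(2ε). -/

import Mathlib

open Finset

/-- convex comparison: x log x + m x + r ≤ 0 on [A,B] if it holds at endpoints. -/
lemma aux_seg (A B m r : ℝ) (hA0 : 0 ≤ A) (hAB : A ≤ B)
    (hA : A * Real.log A + m * A + r ≤ 0) (hB : B * Real.log B + m * B + r ≤ 0)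
    (x : ℝ) (hx1 : A ≤ x) (hx2 : x ≤ B) : x * Real.log x + m * x + r ≤ 0 := by
  rcases eq_or_lt_of_le hAB with h | h
  · have : x = A := le_antisymm (h ▸ hx2) hx1
    simpa [this] using hA
  · set s := (x - A) / (B - A) with hs
    have hBA : 0 < B - A := by linarith
    have hs0 : 0 ≤ s := div_nonneg (by linarith) hBA.le
    have hs1 : s ≤ 1 := (div_le_one hBA).2 (by linarith)
    have hxs : x = (1 - s) * A + s * B := by
      have h' : s * (B - A) = x - A := by rw [hs]; exact div_mul_cancel₀ _ hBA.ne'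
      linear_combination -h'
    have hconv := Real.convexOn_mul_log.2 (Set.mem_Ici.2 hA0)
      (Set.mem_Ici.2 (le_trans hA0 hAB)) (by linarith : (0:ℝ) ≤ 1 - s) hs0 (by ring)
    simp only [smul_eq_mul] at hconv
    rw [← hxs] at hconv
    have h1 : (1 - s) * (A * Real.log A + m * A + r) ≤ 0 :=
      mul_nonpos_of_nonneg_of_nonpos (by linarith) hA
    have h2 : s * (B * Real.log B + m * B + r) ≤ 0 :=
      mul_nonpos_of_nonneg_of_nonpos hs0 hB
    have e : m * x + r = (1 - s) * (m * A + r) + s * (m * B + r) := by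
      rw [hxs]; ring
    calc x * Real.log x + m * x + r
        ≤ ((1 - s) * (A * Real.log A) + s * (B * Real.log B))
          + ((1 - s) * (m * A + r) + s * (m * B + r)) := by linarith [hconv, e]
      _ = (1 - s) * (A * Real.log A + m * A + r)
          + s * (B * Real.log B + m * B + r) := by ring
      _ ≤ 0 := by linarith [h1, h2]

/-- key pointwise inequality -/
lemma key_ineq (d : ℕ) (hd : 1 ≤ d) (c κ : ℝ) (hκ : 0 < κ) (hc : Real.log d ≤ c)
    (x : ℝ) (hx0 : 0 ≤ x) (hx1 : x ≤ 1) :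
    x * Real.log x + x * Real.log d
      ≤ c * |x - 1/(d:ℝ)| + (c + κ) * (x - 1/(d:ℝ)) + κ * (1/(d:ℝ)) := by
  have hd1 : (1:ℝ) ≤ (d:ℝ) := by exact_mod_cast hd
  set u : ℝ := 1/(d:ℝ) with hu
  have hu0 : 0 < u := by positivity
  have hu1 : u ≤ 1 := by rw [hu]; rw [div_le_one (by linarith)]; exact hd1
  have hlogu : Real.log u = -Real.log d := by
    rw [hu, one_div, Real.log_inv]
  have hld0 : 0 ≤ Real.log d := Real.log_nonneg hd1
  have hc0 : 0 ≤ c := le_trans hld0 hc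
  rcases le_total x u with hxu | hxu
  · have habs : |x - u| = u - x := by
      rw [abs_of_nonpos (by linarith)]; ring
    rw [habs]
    have h := aux_seg 0 u (Real.log d - κ) 0 le_rfl hu0.le
      (by simp) (by rw [mul_comm u (Real.log u), hlogu]; nlinarith) x hx0 hxu
    nlinarith [h]
  · have habs : |x - u| = x - u := abs_of_nonneg (by linarith)
    rw [habs]
    have hend1 : Real.log d - (2*c + κ) + 2*c*u ≤ 0 := by
      rcases eq_or_lt_of_le hd1 with h1 | h1
      · have : u = 1 := by rw [hu, ← h1]; norm_num
        rw [this, ← h1]; simp; linarith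
      · have hu2 : u ≤ 1/2 := by
          rw [hu, div_le_div_iff₀ (by linarith) (by norm_num)]
          have : (2:ℕ) ≤ d := by exact_mod_cast Nat.succ_le_of_lt (by exact_mod_cast h1)
          have : (2:ℝ) ≤ (d:ℝ) := by exact_mod_cast this
          linarith
        nlinarith [mul_nonneg hc0 (by linarith : (0:ℝ) ≤ 1 - 2*u)]
    have h := aux_seg u 1 (Real.log d - (2*c + κ)) (2*c*u) hu0.le hu1
      (by rw [mul_comm u (Real.log u), hlogu]; nlinarith)
      (by simp [Real.log_one]; nlinarith [hend1]) x hxu hx1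
    nlinarith [h]

lemma sum_normSq_mulVec {n : Type*} [Fintype n] [DecidableEq n]
    (A : Matrix n n ℂ) (hA : A ∈ Matrix.unitaryGroup n ℂ) (v : n → ℂ) :
    ∑ x, ‖(A.mulVec v) x‖ ^ 2 = ∑ x, ‖v x‖ ^ 2 := by
  have key : ∀ w : n → ℂ, ((∑ x, ‖w x‖ ^ 2 : ℝ) : ℂ) = dotProduct (star w) w := by
    intro w
    rw [dotProduct]
    push_cast
    refine Finset.sum_congr rfl fun x _ => ?_
    rw [Pi.star_apply, Complex.star_def, ← Complex.normSq_eq_conj_mul_self,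
      ← Complex.sq_norm]
    push_cast
    ring
  have h1 : dotProduct (star (A.mulVec v)) (A.mulVec v)
      = dotProduct (star v) v := by
    rw [Matrix.star_mulVec, ← Matrix.dotProduct_mulVec, Matrix.mulVec_mulVec,
      ← Matrix.star_eq_conjTranspose, Matrix.mem_unitaryGroup_iff'.mp hA,
      Matrix.one_mulVec]
  have := (key (A.mulVec v)).trans (h1.trans (key v).symm)
  exact_mod_cast this


open scoped BigOperators

theorem stmt8 (dA dB t : ℕ) (hA : 0 < dA) (hB : 0 < dB) (ht : 0 < t)
    (ε : ℝ) (hε : 0 < ε) (hε' : ε < 1 / (2 * Real.exp 1))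
    (U : Fin t → Matrix (Fin dA × Fin dB) (Fin dA × Fin dB) ℂ)
    (hU : ∀ k, U k ∈ Matrix.unitaryGroup (Fin dA × Fin dB) ℂ)
    (hMUR : ∀ ψ : EuclideanSpace ℂ (Fin dA × Fin dB), ‖ψ‖ = 1 →
      (1 / (t : ℝ)) * ∑ k, (1 / 2) * ∑ a : Fin dA,
          |(∑ b : Fin dB, ‖(U k).mulVec ψ (a, b)‖ ^ 2) - 1 / (dA : ℝ)| ≤ ε) :
    ∀ ψ : EuclideanSpace ℂ (Fin dA × Fin dB), ‖ψ‖ = 1 →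
      (1 - 2 * ε) * Real.logb 2 dA - (-(2 * ε) * Real.log (2 * ε))
        ≤ (1 / (t : ℝ)) * ∑ k, ∑ x : Fin dA × Fin dB,
            -(‖(U k).mulVec ψ x‖ ^ 2 * Real.logb 2 (‖(U k).mulVec ψ x‖ ^ 2)) := by
  intro ψ hψ
  have hl2 : (0:ℝ) < Real.log 2 := Real.log_pos (by norm_num)
  have h2ε : (0:ℝ) < 2*ε := by linarith
  have hlog2ε : Real.log (2*ε) < -1 := by
    have h1 : 2*ε < Real.exp (-1) := by
      rw [Real.exp_neg, inv_eq_one_div, lt_div_iff₀ (Real.exp_pos 1)]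
      rw [lt_div_iff₀ (by positivity)] at hε'
      linarith
    calc Real.log (2*ε) < Real.log (Real.exp (-1)) := Real.log_lt_log h2ε h1
      _ = -1 := Real.log_exp _
  set κ : ℝ := 2*ε*Real.log 2 with hκdef
  have hκ : 0 < κ := by positivity
  set c : ℝ := Real.log dA - Real.log 2 * (Real.log (2*ε) + 1) with hcdef
  have hcge : Real.log dA ≤ c := by nlinarith [hl2, hlog2ε]
  have hc0 : 0 ≤ c := le_trans (Real.log_nonneg (by exact_mod_cast hA)) hcge
  -- distributions
  set p : Fin t → Fin dA × Fin dB → ℝ := fun k x => ‖(U k).mulVec ψ x‖^2 with hpdef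
  set q : Fin t → Fin dA → ℝ := fun k a => ∑ b, p k (a,b) with hqdef
  set u : ℝ := 1/(dA:ℝ) with hudef
  set δ : Fin t → ℝ := fun k => (1/2) * ∑ a, |q k a - u| with hδdef
  have hδave : (1/(t:ℝ)) * ∑ k, δ k ≤ ε := hMUR ψ hψ
  clear_value p q u δ κ c
  have hp0 : ∀ k x, 0 ≤ p k x := fun k x => by
    simp only [hpdef]; positivity
  have hψsum : ∑ x, ‖ψ x‖^2 = 1 := by
    have h := EuclideanSpace.norm_eq ψ
    rw [hψ] at h
    exact Real.sqrt_eq_one.mp h.symm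
  have hpsum : ∀ k, ∑ x, p k x = 1 := fun k => by
    rw [hpdef]
    exact (sum_normSq_mulVec (U k) (hU k) ψ).trans hψsum
  have hq0 : ∀ k a, 0 ≤ q k a := fun k a => by
    simp only [hqdef]; exact Finset.sum_nonneg fun b _ => hp0 k _
  have hqsum : ∀ k, ∑ a, q k a = 1 := fun k => by
    rw [hqdef, ← Fintype.sum_prod_type]
    exact hpsum k
  have hq1 : ∀ k a, q k a ≤ 1 := fun k a => by
    rw [← hqsum k]
    exact Finset.single_le_sum (fun a _ => hq0 k a) (Finset.mem_univ a)
  -- step A : marginal entropy ≤ joint entropy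
  have stepA : ∀ k, ∑ a, -(q k a * Real.logb 2 (q k a))
      ≤ ∑ x : Fin dA × Fin dB, -(p k x * Real.logb 2 (p k x)) := by
    intro k
    rw [Fintype.sum_prod_type]
    refine Finset.sum_le_sum fun a _ => ?_
    have e1 : -(q k a * Real.logb 2 (q k a))
        = ∑ b, -(p k (a,b) * Real.logb 2 (q k a)) := by
      rw [Finset.sum_neg_distrib, ← Finset.sum_mul]
      simp only [hqdef]
    rw [e1]
    refine Finset.sum_le_sum fun b _ => ?_
    rcases eq_or_lt_of_le (hp0 k (a,b)) with h0 | h0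
    · rw [← h0]; simp
    · have hpq : p k (a,b) ≤ q k a := by
        simp only [hqdef]
        exact Finset.single_le_sum (fun b _ => hp0 k _) (Finset.mem_univ b)
      have hlb := Real.logb_le_logb_of_le (by norm_num : (1:ℝ) < 2) h0 hpq
      nlinarith [hlb, h0.le]
  -- step B : marginal entropy lower bound via key inequality
  have stepB : ∀ k, (Real.log dA - κ - 2*c*(δ k))/Real.log 2
      ≤ ∑ a, -(q k a * Real.logb 2 (q k a)) := by
    intro k
    have hsumkey : ∑ a, (q k a * Real.log (q k a) + q k a * Real.log dA)
        ≤ ∑ a, (c * |q k a - u| + (c+κ)*(q k a - u) + κ * u) := by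
      refine Finset.sum_le_sum fun a _ => ?_
      have := key_ineq dA hA c κ hκ hcge (q k a) (hq0 k a) (hq1 k a)
      rwa [← hudef] at this
    have hL : ∑ a, (q k a * Real.log (q k a) + q k a * Real.log dA)
        = (∑ a, q k a * Real.log (q k a)) + Real.log dA := by
      rw [Finset.sum_add_distrib, ← Finset.sum_mul, hqsum k, one_mul]
    have hdu : (dA:ℝ) * u = 1 := by
      rw [hudef]; field_simp
    have h1 : ∑ a : Fin dA, (q k a - u) = 0 := by
      rw [Finset.sum_sub_distrib, hqsum k, Finset.sum_const, Finset.card_univ,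
        Fintype.card_fin, nsmul_eq_mul, hdu]
      ring
    have hR : ∑ a, (c * |q k a - u| + (c+κ)*(q k a - u) + κ * u)
        = c * (∑ a, |q k a - u|) + κ := by
      rw [Finset.sum_add_distrib, Finset.sum_add_distrib, ← Finset.mul_sum,
        ← Finset.mul_sum, h1, Finset.sum_const, Finset.card_univ, Fintype.card_fin,
        nsmul_eq_mul]
      rw [show (dA:ℝ) * (κ * u) = κ * ((dA:ℝ) * u) by ring, hdu]
      ring
    have hent : ∑ a, -(q k a * Real.logb 2 (q k a))
        = (-(∑ a, q k a * Real.log (q k a)))/Real.log 2 := by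
      rw [Finset.sum_neg_distrib, neg_div, Finset.sum_div]
      congr 1
      refine Finset.sum_congr rfl fun a _ => ?_
      rw [Real.logb]
      ring
    rw [hent]
    gcongr
    have h2 : (∑ a, q k a * Real.log (q k a)) + Real.log dA
        ≤ c * (∑ a : Fin dA, |q k a - u|) + κ := by
      rw [← hL, ← hR]; exact hsumkey
    have hδk : δ k = (1/2) * ∑ a : Fin dA, |q k a - u| := by
      simp only [hδdef]
    rw [hδk]
    set S := ∑ a : Fin dA, |q k a - u| with hS
    set Q := ∑ a : Fin dA, q k a * Real.log (q k a) with hQ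
    linarith [h2]
  -- combine
  have hδ0 : ∀ k, 0 ≤ δ k := fun k => by
    rw [hδdef]
    have : (0:ℝ) ≤ ∑ a, |q k a - u| := Finset.sum_nonneg fun a _ => abs_nonneg _
    linarith
  have ht0 : (0:ℝ) < (t:ℝ) := by exact_mod_cast ht
  have hstep : ∀ k, (Real.log dA - κ - 2*c*(δ k))/Real.log 2
      ≤ ∑ x : Fin dA × Fin dB, -(p k x * Real.logb 2 (p k x)) :=
    fun k => le_trans (stepB k) (stepA k)
  calc (1 - 2 * ε) * Real.logb 2 dA - (-(2 * ε) * Real.log (2 * ε))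
      = (Real.log dA - κ - 2*c*ε)/Real.log 2 := by
        rw [Real.logb, hκdef, hcdef]
        field_simp
        ring
    _ ≤ (Real.log dA - κ - 2*c*((1/(t:ℝ)) * ∑ k, δ k))/Real.log 2 := by
        gcongr
    _ = (1/(t:ℝ)) * ∑ k, (Real.log dA - κ - 2*c*(δ k))/Real.log 2 := by
        have hsum3 : ∑ k, (Real.log dA - κ - 2*c*(δ k))/Real.log 2
            = ((t:ℝ)*(Real.log dA - κ) - 2*c*(∑ k, δ k))/Real.log 2 := by
          rw [← Finset.sum_div]
          congr 1
          rw [Finset.sum_sub_distrib, ← Finset.mul_sum, Finset.sum_const,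
            Finset.card_univ, Fintype.card_fin, nsmul_eq_mul]
        rw [hsum3]
        field_simp
    _ ≤ (1/(t:ℝ)) * ∑ k, ∑ x : Fin dA × Fin dB,
          -(p k x * Real.logb 2 (p k x)) := by
        apply mul_le_mul_of_nonneg_left _ (by positivity)
        exact Finset.sum_le_sum fun k _ => hstep k
    _ = (1/(t:ℝ)) * ∑ k, ∑ x : Fin dA × Fin dB,
          -(‖(U k).mulVec ψ x‖ ^ 2 * Real.logb 2 (‖(U k).mulVec ψ x‖ ^ 2)) := by
        simp only [hpdef]
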